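/- For natural numbers n, a, b with a ≤ n, b ≤ n, the sum over k from 0 to n of C(a,k)·C(b,n-k)·H(k)·H(n-k) equals C(a+b,n)·(H2(n) - H2(a+b) + (H(n) - H(a+b) + H(a))·(H(n) - H(a+b) + H(b))), where H and H2 are the harmonic numbers of order 1 and 2. -/

import Mathlib

open Finset

noncomputable def H (m : ℕ) : ℚ := ∑ j ∈ Finset.range m, (1 : ℚ) / (j + 1)

noncomputable def H2 (m : ℕ) : ℚ := ∑ j ∈ Finset.range m, (1 : ℚ) / ((j : ℚ) + 1) ^ 2

lemma H_succ (m : ℕ) : H (m+1) = H m + 1/((m:ℚ)+1) := by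
  simp [H, Finset.sum_range_succ]

lemma H2_succ (m : ℕ) : H2 (m+1) = H2 m + 1/((m:ℚ)+1)^2 := by
  simp [H2, Finset.sum_range_succ]

lemma keyQ (m k : ℕ) : ((m+1).choose (k+1) : ℚ) * ((k:ℚ)+1) = (m.choose k : ℚ) * ((m:ℚ)+1) := by
  have h : (m+1) * m.choose k = (m+1).choose (k+1) * (k+1) := by
    simpa [Nat.succ_eq_add_one] using Nat.add_one_mul_choose_eq m k
  have h2 : (((m+1) * m.choose k : ℕ) : ℚ) = (((m+1).choose (k+1) * (k+1) : ℕ) : ℚ) := by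
    exact_mod_cast congrArg (fun x : ℕ => (x : ℚ)) h
  push_cast at h2
  linear_combination -h2

lemma vand (x y n : ℕ) :
    ∑ k ∈ range (n+1), (x.choose k : ℚ) * (y.choose (n-k) : ℚ) = ((x+y).choose n : ℚ) := by
  have h := Nat.add_choose_eq x y n
  rw [Finset.Nat.sum_antidiagonal_eq_sum_range_succ_mk] at h
  rw [h]
  push_cast
  rfl

lemma lemA (m : ℕ) : ∀ k : ℕ,
    ∑ j ∈ range m, ((m-1-j).choose k : ℚ) / ((j:ℚ)+1) = (m.choose k : ℚ) * (H m - H k) := by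
  induction m with
  | zero => intro k; cases k <;> simp [H]
  | succ m ih =>
    intro k
    have hstep : ∑ j ∈ range (m+1), ((m+1-1-j).choose k : ℚ) / ((j:ℚ)+1)
        = (∑ j ∈ range m, (((m-1-j)+1).choose k : ℚ) / ((j:ℚ)+1)) + ((0).choose k : ℚ)/((m:ℚ)+1) := by
      rw [Finset.sum_range_succ]
      congr 1
      · refine Finset.sum_congr rfl (fun j hj => ?_)
        have hj' : j < m := Finset.mem_range.mp hj
        have he : m+1-1-j = (m-1-j)+1 := by omega
        rw [he]
      · have he : m+1-1-m = 0 := by omega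
        rw [he]
    rw [hstep]
    cases k with
    | zero =>
      simp only [Nat.choose_zero_right, Nat.cast_one, H_succ]
      have h0 : H 0 = 0 := by simp [H]
      rw [h0]
      have ihm := ih 0
      simp only [Nat.choose_zero_right, Nat.cast_one, h0] at ihm
      rw [ihm]
      ring
    | succ k =>
      have hpas : ∀ j ∈ range m, (((m-1-j)+1).choose (k+1) : ℚ) / ((j:ℚ)+1)
          = ((m-1-j).choose (k+1) : ℚ) / ((j:ℚ)+1) + ((m-1-j).choose k : ℚ) / ((j:ℚ)+1) := by
        intro j hj
        rw [Nat.choose_succ_succ]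
        push_cast
        ring
      rw [Finset.sum_congr rfl hpas, Finset.sum_add_distrib, ih (k+1), ih k]
      have hkey := keyQ m k
      have hpq : ((m+1).choose (k+1) : ℚ) = (m.choose (k+1) : ℚ) + (m.choose k : ℚ) := by
        rw [Nat.choose_succ_succ]; push_cast; ring
      have hm1 : ((m:ℚ)+1) ≠ 0 := by positivity
      have hk1 : ((k:ℚ)+1) ≠ 0 := by positivity
      have hd : (m.choose k : ℚ) * (1/((k:ℚ)+1))
          = ((m.choose (k+1) : ℚ) + (m.choose k : ℚ)) * (1/((m:ℚ)+1)) := by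
        rw [mul_one_div, mul_one_div, div_eq_div_iff hk1 hm1]
        linear_combination ((k:ℚ)+1) * hpq - hkey
      rw [Nat.choose_zero_succ, H_succ, H_succ]
      push_cast
      linear_combination (H k + 1/((k:ℚ)+1) - H m - 1/((m:ℚ)+1)) * hpq + hd

lemma H_zero : H 0 = 0 := by simp [H]

lemma H2_succ' (m : ℕ) : H2 (m+1) = H2 m + (1/((m:ℚ)+1)) * (1/((m:ℚ)+1)) := by
  rw [H2_succ]
  have h : ((m:ℚ)+1) ≠ 0 := by positivity
  field_simp
lemma H2_zero : H2 0 = 0 := by simp [H2]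

lemma hrefl (m : ℕ) : ∑ j ∈ range m, (1:ℚ)/(((m-1-j : ℕ):ℚ)+1) = H m := by
  simpa [H] using Finset.sum_range_reflect (fun j => (1:ℚ)/((j:ℚ)+1)) m

lemma lemC (m : ℕ) : ∀ n : ℕ,
    ∑ j ∈ range m, ((m-1-j).choose n : ℚ) * H (m-1-j) / ((j:ℚ)+1)
    = (m.choose n : ℚ) * (H2 n - H2 m + H m * (H m - H n)) := by
  induction m with
  | zero => intro n; cases n <;> simp [H, H2]
  | succ m ih =>
    intro n
    have hstep : ∑ j ∈ range (m+1), ((m+1-1-j).choose n : ℚ) * H (m+1-1-j) / ((j:ℚ)+1)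
        = ∑ j ∈ range m, (((m-1-j)+1).choose n : ℚ) * H ((m-1-j)+1) / ((j:ℚ)+1) := by
      rw [Finset.sum_range_succ]
      have he : m+1-1-m = 0 := by omega
      rw [he, H_zero]
      rw [mul_zero, zero_div, add_zero]
      refine Finset.sum_congr rfl (fun j hj => ?_)
      have hj' : j < m := Finset.mem_range.mp hj
      have he2 : m+1-1-j = (m-1-j)+1 := by omega
      rw [he2]
    rw [hstep]
    cases n with
    | zero =>
      have hpt : ∀ j ∈ range m, (((m-1-j)+1).choose 0 : ℚ) * H ((m-1-j)+1) / ((j:ℚ)+1)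
          = ((m-1-j).choose 0 : ℚ) * H (m-1-j) / ((j:ℚ)+1)
            + (1/((m:ℚ)+1)) * ((1:ℚ)/((j:ℚ)+1))
            + (1/((m:ℚ)+1)) * ((1:ℚ)/(((m-1-j : ℕ):ℚ)+1)) := by
        intro j hj
        have hj' : j < m := Finset.mem_range.mp hj
        have h' : (m-1-j) + (j+1) = m := by omega
        have hx : (((m-1-j : ℕ)):ℚ) + ((j:ℚ)+1) = (m:ℚ) := by
          exact_mod_cast congrArg (fun x : ℕ => (x:ℚ)) h'
        simp only [Nat.choose_zero_right, Nat.cast_one, one_mul, H_succ]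
        have hsub : (((m-1-j : ℕ)):ℚ) = (m:ℚ) - (j:ℚ) - 1 := by linarith [hx]
        rw [hsub]
        have hjm : ((j:ℚ)) < (m:ℚ) := by exact_mod_cast hj'
        rw [show (m:ℚ) - (j:ℚ) - 1 + 1 = (m:ℚ) - (j:ℚ) by ring]
        have hu : (m:ℚ) - (j:ℚ) ≠ 0 := by intro h; linarith
        have hjq : ((j:ℚ)+1) ≠ 0 := by positivity
        have hmq : ((m:ℚ)+1) ≠ 0 := by positivity
        field_simp
        ring
      rw [Finset.sum_congr rfl hpt, Finset.sum_add_distrib, Finset.sum_add_distrib,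
        ← Finset.mul_sum, ← Finset.mul_sum, hrefl, ih 0]
      have hH : ∑ j ∈ range m, (1:ℚ)/((j:ℚ)+1) = H m := rfl
      rw [hH]
      simp only [Nat.choose_zero_right, Nat.cast_one, one_mul, H_succ, H2_succ', H2_zero, H_zero]
      ring
    | succ k =>
      have hpt : ∀ j ∈ range m, (((m-1-j)+1).choose (k+1) : ℚ) * H ((m-1-j)+1) / ((j:ℚ)+1)
          = ((m-1-j).choose (k+1) : ℚ) * H (m-1-j) / ((j:ℚ)+1)
            + ((m-1-j).choose k : ℚ) * H (m-1-j) / ((j:ℚ)+1)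
            + (1/((k:ℚ)+1)) * (((m-1-j).choose k : ℚ)/((j:ℚ)+1)) := by
        intro j hj
        have hpasc : (((m-1-j)+1).choose (k+1) : ℚ)
            = ((m-1-j).choose k : ℚ) + ((m-1-j).choose (k+1) : ℚ) := by
          rw [Nat.choose_succ_succ]; push_cast; ring
        have k1 := keyQ (m-1-j) k
        have hMq : (((m-1-j : ℕ)):ℚ) + 1 ≠ 0 := by positivity
        have hkq : ((k:ℚ)+1) ≠ 0 := by positivity
        have hq : (((m-1-j)+1).choose (k+1) : ℚ) * (1/(((m-1-j:ℕ):ℚ)+1))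
            = ((m-1-j).choose k : ℚ) * (1/((k:ℚ)+1)) := by
          rw [mul_one_div, mul_one_div, div_eq_div_iff hMq hkq]
          linear_combination k1
        rw [H_succ]
        linear_combination (H (m-1-j) / ((j:ℚ)+1)) * hpasc + (1/((j:ℚ)+1)) * hq
      rw [Finset.sum_congr rfl hpt, Finset.sum_add_distrib, Finset.sum_add_distrib,
        ← Finset.mul_sum, ih (k+1), ih k]
      have hA : ∑ j ∈ range m, ((m-1-j).choose k : ℚ)/((j:ℚ)+1)
          = (m.choose k : ℚ) * (H m - H k) := lemA m k
      rw [hA]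
      have hpq : ((m+1).choose (k+1) : ℚ) = (m.choose (k+1) : ℚ) + (m.choose k : ℚ) := by
        rw [Nat.choose_succ_succ]; push_cast; ring
      have hm1 : ((m:ℚ)+1) ≠ 0 := by positivity
      have hk1 : ((k:ℚ)+1) ≠ 0 := by positivity
      have hkey := keyQ m k
      have hd : (m.choose k : ℚ) * (1/((k:ℚ)+1))
          = ((m.choose (k+1) : ℚ) + (m.choose k : ℚ)) * (1/((m:ℚ)+1)) := by
        rw [mul_one_div, mul_one_div, div_eq_div_iff hk1 hm1]
        linear_combination ((k:ℚ)+1) * hpq - hkey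
      rw [H_succ, H_succ, H2_succ', H2_succ']
      linear_combination (2*H m - H k - 1/((k:ℚ)+1)) * hd
        - (H2 k + (1/((k:ℚ)+1))*(1/((k:ℚ)+1)) - H2 m - (1/((m:ℚ)+1))*(1/((m:ℚ)+1))
            + (H m + 1/((m:ℚ)+1)) * (H m + 1/((m:ℚ)+1) - H k - 1/((k:ℚ)+1))) * hpq

lemma swapu (n x c y : ℕ) :
    ∑ k ∈ range (n+1), ((x.choose k : ℚ) * ∑ j ∈ range c, ((y-1-j).choose (n-k) : ℚ)/((j:ℚ)+1))
    = ∑ j ∈ range c, ((x + (y-1-j)).choose n : ℚ)/((j:ℚ)+1) := by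
  simp_rw [Finset.mul_sum]
  rw [Finset.sum_comm]
  refine Finset.sum_congr rfl fun j _ => ?_
  have hpt : ∀ k ∈ range (n+1), (x.choose k:ℚ) * (((y-1-j).choose (n-k):ℚ)/((j:ℚ)+1))
      = ((x.choose k:ℚ) * ((y-1-j).choose (n-k):ℚ)) * (1/((j:ℚ)+1)) := fun k _ => by ring
  rw [Finset.sum_congr rfl hpt, ← Finset.sum_mul, vand, mul_one_div]

lemma swapv (n y c x : ℕ) :
    ∑ k ∈ range (n+1), ((y.choose (n-k) : ℚ) * ∑ i ∈ range c, ((x-1-i).choose k : ℚ)/((i:ℚ)+1))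
    = ∑ i ∈ range c, (((x-1-i) + y).choose n : ℚ)/((i:ℚ)+1) := by
  simp_rw [Finset.mul_sum]
  rw [Finset.sum_comm]
  refine Finset.sum_congr rfl fun i _ => ?_
  have hpt : ∀ k ∈ range (n+1), (y.choose (n-k):ℚ) * (((x-1-i).choose k:ℚ)/((i:ℚ)+1))
      = (((x-1-i).choose k:ℚ) * ((y.choose (n-k)):ℚ)) * (1/((i:ℚ)+1)) := fun k _ => by ring
  rw [Finset.sum_congr rfl hpt, ← Finset.sum_mul, vand, mul_one_div]

theorem stmt_10 (n a b : ℕ) (ha : a ≤ n) (hb : b ≤ n) :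
    ∑ k ∈ Finset.range (n + 1),
      (a.choose k : ℚ) * b.choose (n - k) * H k * H (n - k) =
    ((a + b).choose n : ℚ) *
      (H2 n - H2 (a + b) + (H n - H (a + b) + H a) * (H n - H (a + b) + H b)) := by
  have e1 : ∀ k : ℕ, (a.choose k : ℚ) * H k
      = (a.choose k : ℚ) * H a - ∑ i ∈ range a, ((a-1-i).choose k : ℚ)/((i:ℚ)+1) := by
    intro k; rw [lemA a k]; ring
  have e2 : ∀ k : ℕ, (b.choose k : ℚ) * H k
      = (b.choose k : ℚ) * H b - ∑ j ∈ range b, ((b-1-j).choose k : ℚ)/((j:ℚ)+1) := by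
    intro k; rw [lemA b k]; ring
  have hL : ∑ k ∈ range (n + 1), (a.choose k : ℚ) * b.choose (n - k) * H k * H (n - k)
      = ∑ k ∈ range (n+1),
          (H a * H b * ((a.choose k:ℚ) * (b.choose (n-k):ℚ))
           - H a * ((a.choose k:ℚ) * ∑ j ∈ range b, ((b-1-j).choose (n-k) : ℚ)/((j:ℚ)+1))
           - H b * ((b.choose (n-k):ℚ) * ∑ i ∈ range a, ((a-1-i).choose k : ℚ)/((i:ℚ)+1))
           + (∑ i ∈ range a, ((a-1-i).choose k : ℚ)/((i:ℚ)+1))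
             * (∑ j ∈ range b, ((b-1-j).choose (n-k) : ℚ)/((j:ℚ)+1))) := by
    refine Finset.sum_congr rfl fun k _ => ?_
    calc (a.choose k : ℚ) * b.choose (n - k) * H k * H (n - k)
        = ((a.choose k : ℚ) * H k) * ((b.choose (n-k) : ℚ) * H (n-k)) := by ring
      _ = _ := by rw [e1 k, e2 (n-k)]; ring
  rw [hL, Finset.sum_add_distrib, Finset.sum_sub_distrib, Finset.sum_sub_distrib,
    ← Finset.mul_sum, ← Finset.mul_sum, ← Finset.mul_sum, vand, swapu n a b b, swapv n b a a]
  -- T2 value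
  have hT2 : ∑ j ∈ range b, ((a + (b-1-j)).choose n : ℚ)/((j:ℚ)+1)
      = ((a+b).choose n : ℚ) * (H (a+b) - H n) := by
    have hre : ∀ j ∈ range b, ((a + (b-1-j)).choose n : ℚ)/((j:ℚ)+1)
        = ((a+b-1-j).choose n : ℚ)/((j:ℚ)+1) := by
      intro j hj
      have hjb : j < b := Finset.mem_range.mp hj
      have : a + (b-1-j) = a+b-1-j := by omega
      rw [this]
    rw [Finset.sum_congr rfl hre,
      Finset.sum_subset (Finset.range_subset_range.mpr (Nat.le_add_left b a)) ?hz]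
    · exact lemA (a+b) n
    case hz =>
      intro j hj hnot
      have hj1 : j < a+b := Finset.mem_range.mp hj
      have hj2 : b ≤ j := le_of_not_gt (fun h => hnot (Finset.mem_range.mpr h))
      rw [Nat.choose_eq_zero_of_lt (show a+b-1-j < n by omega)]
      simp
  have hT3 : ∑ i ∈ range a, (((a-1-i) + b).choose n : ℚ)/((i:ℚ)+1)
      = ((a+b).choose n : ℚ) * (H (a+b) - H n) := by
    have hre : ∀ i ∈ range a, (((a-1-i) + b).choose n : ℚ)/((i:ℚ)+1)
        = ((a+b-1-i).choose n : ℚ)/((i:ℚ)+1) := by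
      intro i hi
      have hia : i < a := Finset.mem_range.mp hi
      have : (a-1-i) + b = a+b-1-i := by omega
      rw [this]
    rw [Finset.sum_congr rfl hre,
      Finset.sum_subset (Finset.range_subset_range.mpr (Nat.le_add_right a b)) ?hz]
    · exact lemA (a+b) n
    case hz =>
      intro i hi hnot
      have hi1 : i < a+b := Finset.mem_range.mp hi
      have hi2 : a ≤ i := le_of_not_gt (fun h => hnot (Finset.mem_range.mpr h))
      rw [Nat.choose_eq_zero_of_lt (show a+b-1-i < n by omega)]
      simp
  -- T4
  have hT4 : ∑ k ∈ range (n+1),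
        (∑ i ∈ range a, ((a-1-i).choose k : ℚ)/((i:ℚ)+1))
          * (∑ j ∈ range b, ((b-1-j).choose (n-k) : ℚ)/((j:ℚ)+1))
      = ((a+b).choose n : ℚ) * (H2 n - H2 (a+b) + H (a+b) * (H (a+b) - H n))
        - H n * (((a+b).choose n : ℚ) * (H (a+b) - H n)) := by
    simp_rw [Finset.sum_mul]
    rw [Finset.sum_comm]
    have hstep1 : ∀ i ∈ range a,
        ∑ k ∈ range (n+1), (((a-1-i).choose k : ℚ)/((i:ℚ)+1))
          * (∑ j ∈ range b, ((b-1-j).choose (n-k) : ℚ)/((j:ℚ)+1))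
        = ((a+b-1-i).choose n : ℚ) * H (a+b-1-i) / ((i:ℚ)+1)
          - H n * (((a+b-1-i).choose n : ℚ)/((i:ℚ)+1)) := by
      intro i hi
      have hia : i < a := Finset.mem_range.mp hi
      have hpt : ∀ k ∈ range (n+1), (((a-1-i).choose k : ℚ)/((i:ℚ)+1))
          * (∑ j ∈ range b, ((b-1-j).choose (n-k) : ℚ)/((j:ℚ)+1))
          = (1/((i:ℚ)+1)) * (((a-1-i).choose k : ℚ)
              * ∑ j ∈ range b, ((b-1-j).choose (n-k) : ℚ)/((j:ℚ)+1)) := fun k _ => by ring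
      rw [Finset.sum_congr rfl hpt, ← Finset.mul_sum, swapu n (a-1-i) b b]
      have hre : ∀ j ∈ range b, (((a-1-i) + (b-1-j)).choose n : ℚ)/((j:ℚ)+1)
          = (((a+b-1-i)-1-j).choose n : ℚ)/((j:ℚ)+1) := by
        intro j hj
        have hjb : j < b := Finset.mem_range.mp hj
        have : (a-1-i) + (b-1-j) = (a+b-1-i)-1-j := by omega
        rw [this]
      rw [Finset.sum_congr rfl hre,
        Finset.sum_subset (Finset.range_subset_range.mpr (show b ≤ a+b-1-i by omega)) ?hz2]
      · rw [lemA (a+b-1-i) n]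
        ring
      case hz2 =>
        intro j hj hnot
        have hj1 : j < a+b-1-i := Finset.mem_range.mp hj
        have hj2 : b ≤ j := le_of_not_gt (fun h => hnot (Finset.mem_range.mpr h))
        rw [Nat.choose_eq_zero_of_lt (show (a+b-1-i)-1-j < n by omega)]
        simp
    rw [Finset.sum_congr rfl hstep1, Finset.sum_sub_distrib, ← Finset.mul_sum]
    have hs1 : ∑ i ∈ range a, ((a+b-1-i).choose n : ℚ) * H (a+b-1-i) / ((i:ℚ)+1)
        = ((a+b).choose n : ℚ) * (H2 n - H2 (a+b) + H (a+b) * (H (a+b) - H n)) := by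
      rw [Finset.sum_subset (Finset.range_subset_range.mpr (Nat.le_add_right a b)) ?hz3]
      · exact lemC (a+b) n
      case hz3 =>
        intro i hi hnot
        have hi1 : i < a+b := Finset.mem_range.mp hi
        have hi2 : a ≤ i := le_of_not_gt (fun h => hnot (Finset.mem_range.mpr h))
        rw [Nat.choose_eq_zero_of_lt (show a+b-1-i < n by omega)]
        simp
    have hs2 : ∑ i ∈ range a, ((a+b-1-i).choose n : ℚ)/((i:ℚ)+1)
        = ((a+b).choose n : ℚ) * (H (a+b) - H n) := by
      rw [Finset.sum_subset (Finset.range_subset_range.mpr (Nat.le_add_right a b)) ?hz4]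
      · exact lemA (a+b) n
      case hz4 =>
        intro i hi hnot
        have hi1 : i < a+b := Finset.mem_range.mp hi
        have hi2 : a ≤ i := le_of_not_gt (fun h => hnot (Finset.mem_range.mpr h))
        rw [Nat.choose_eq_zero_of_lt (show a+b-1-i < n by omega)]
        simp
    rw [hs1, hs2]
  rw [hT2, hT3, hT4]
  ring
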